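/- Let d = 1, θ > 0, and let (ξ_q)_{q ∈ ℤ} be i.i.d. real random variables with density exp(-|x|^θ)/Z(1,θ). For t > 0 let I_k be the connected components of (-t/2, t/2) \ {q + ξ_q : q ∈ ℤ}. Then for every ε ∈ (0,1) and all 3 ≤ s ≤ t, P(sup_k |I_k| ≥ s) ≤ t · exp( -(2(1-ε)/(θ+1)) ((s-3)/2)^{θ+1} + (s/θ) log(1/ε) ). -/

import Mathlib

open MeasureTheory Real Set

lemma intOn_exp_neg_rpow {θ : ℝ} (hθ : 0 < θ) :
    IntegrableOn (fun x : ℝ => Real.exp (-x ^ θ)) (Ioi 0) := by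
  have h := (integrableOn_Ioi_comp_rpow_iff' (fun u : ℝ => Real.exp (-u) * u ^ (θ⁻¹ - 1))
    hθ.ne').mpr (Real.GammaIntegral_convergent (by positivity : (0:ℝ) < θ⁻¹))
  refine h.congr_fun (fun x hx => ?_) measurableSet_Ioi
  have hx0 : (0:ℝ) < x := hx
  have hxθ : (0:ℝ) < x ^ θ := Real.rpow_pos_of_pos hx0 θ
  beta_reduce
  rw [smul_eq_mul, ← Real.rpow_mul hx0.le]
  rw [show θ * (θ⁻¹ - 1) = 1 - θ by field_simp]
  rw [← mul_assoc, mul_comm (x ^ (θ - 1)), mul_assoc, ← Real.rpow_add hx0]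
  norm_num

lemma integrable_exp_neg_abs_rpow {θ : ℝ} (hθ : 0 < θ) :
    Integrable fun x : ℝ => Real.exp (-|x| ^ θ) := by
  have hI : IntegrableOn (fun x : ℝ => Real.exp (-|x| ^ θ)) (Ioi 0) :=
    (intOn_exp_neg_rpow hθ).congr_fun
      (fun x hx => by rw [abs_eq_self.mpr (le_of_lt hx)]) measurableSet_Ioi
  have int_Iic : IntegrableOn (fun x : ℝ => Real.exp (-|x| ^ θ)) (Iic 0) := by
    rw [← Measure.map_neg_eq_self (volume : Measure ℝ)]
    have m : MeasurableEmbedding fun x : ℝ => -x := (Homeomorph.neg ℝ).measurableEmbedding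
    rw [m.integrableOn_map_iff]
    simp_rw [Function.comp_def, abs_neg, neg_preimage, neg_Iic, neg_zero]
    exact Iff.mpr integrableOn_Ici_iff_integrableOn_Ioi hI
  rw [← integrableOn_univ, ← Iic_union_Ioi (a := (0:ℝ))]
  exact int_Iic.union hI

lemma integrable_exp_neg_mul_abs_rpow {θ b : ℝ} (hθ : 0 < θ) (hb : 0 < b) :
    Integrable fun x : ℝ => Real.exp (-(b * |x| ^ θ)) := by
  have ha : (0:ℝ) < b ^ θ⁻¹ := Real.rpow_pos_of_pos hb _
  have h := (integrable_comp_mul_left_iff (fun x : ℝ => Real.exp (-|x| ^ θ)) ha.ne').mpr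
    (integrable_exp_neg_abs_rpow hθ)
  refine h.congr (Filter.Eventually.of_forall fun x => ?_)
  show Real.exp (-|b ^ θ⁻¹ * x| ^ θ) = Real.exp (-(b * |x| ^ θ))
  rw [abs_mul, abs_of_pos ha, Real.mul_rpow ha.le (abs_nonneg x),
    ← Real.rpow_mul hb.le, inv_mul_cancel₀ hθ.ne', Real.rpow_one]

lemma integral_exp_neg_mul_abs_rpow {θ b : ℝ} (hθ : 0 < θ) (hb : 0 < b) :
    ∫ x : ℝ, Real.exp (-(b * |x| ^ θ)) = b ^ (-1/θ) * ∫ x : ℝ, Real.exp (-|x| ^ θ) := by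
  rw [integral_comp_abs (f := fun x => Real.exp (-(b * x ^ θ))),
    integral_comp_abs (f := fun x => Real.exp (-x ^ θ))]
  simp_rw [show ∀ x : ℝ, -(b * x ^ θ) = -b * x ^ θ by intro x; ring]
  rw [integral_exp_neg_mul_rpow hθ hb, integral_exp_neg_rpow hθ]
  ring

lemma Z_pos {θ : ℝ} (hθ : 0 < θ) : 0 < ∫ x : ℝ, Real.exp (-|x| ^ θ) := by
  rw [integral_comp_abs (f := fun x => Real.exp (-x ^ θ)), integral_exp_neg_rpow hθ]
  positivity

lemma tail_bound {θ ε Z r : ℝ} (hθ : 0 < θ) (hε : 0 < ε) (hε1 : ε < 1)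
    (hZ : Z = ∫ x : ℝ, Real.exp (-|x| ^ θ)) (hr : 0 ≤ r)
    {Ω : Type*} [MeasurableSpace Ω] (P : Measure Ω) [IsProbabilityMeasure P]
    (X : Ω → ℝ) (hX : Measurable X)
    (hlaw : Measure.map X P
      = volume.withDensity (fun x => ENNReal.ofReal (Real.exp (-|x| ^ θ) / Z))) :
    P (X ⁻¹' {x | r ≤ |x|})
      ≤ ENNReal.ofReal (ε ^ (-θ⁻¹) * Real.exp (-((1 - ε) * r ^ θ))) := by
  have hZpos : 0 < Z := hZ ▸ Z_pos hθ
  have hms : MeasurableSet {x : ℝ | r ≤ |x|} :=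
    measurableSet_le measurable_const measurable_abs
  have hmap := Measure.map_apply (μ := P) hX hms
  rw [hlaw] at hmap
  rw [← hmap, withDensity_apply _ hms]
  set C := Real.exp (-((1 - ε) * r ^ θ)) with hC
  have hint : Integrable (fun x : ℝ => C * Real.exp (-(ε * |x| ^ θ)) / Z) :=
    ((integrable_exp_neg_mul_abs_rpow hθ hε).const_mul C).div_const Z
  calc ∫⁻ x in {x : ℝ | r ≤ |x|}, ENNReal.ofReal (Real.exp (-|x| ^ θ) / Z)
      ≤ ∫⁻ x in {x : ℝ | r ≤ |x|},
          ENNReal.ofReal (C * Real.exp (-(ε * |x| ^ θ)) / Z) := by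
        refine setLIntegral_mono (by measurability) (fun x hx => ?_)
        refine ENNReal.ofReal_le_ofReal ?_
        have hx' : r ≤ |x| := hx
        have h1 : r ^ θ ≤ |x| ^ θ := Real.rpow_le_rpow hr hx' hθ.le
        have h2 : Real.exp (-|x| ^ θ) ≤ C * Real.exp (-(ε * |x| ^ θ)) := by
          rw [hC, ← Real.exp_add]
          exact Real.exp_le_exp.mpr (by nlinarith)
        exact div_le_div_of_nonneg_right h2 hZpos.le |>.trans_eq rfl
    _ ≤ ∫⁻ x, ENNReal.ofReal (C * Real.exp (-(ε * |x| ^ θ)) / Z) :=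
        setLIntegral_le_lintegral _ _
    _ = ENNReal.ofReal (∫ x : ℝ, C * Real.exp (-(ε * |x| ^ θ)) / Z) :=
        (ofReal_integral_eq_lintegral_ofReal hint
          (Filter.Eventually.of_forall fun x => by positivity)).symm
    _ ≤ ENNReal.ofReal (ε ^ (-θ⁻¹) * C) := by
        refine ENNReal.ofReal_le_ofReal (le_of_eq ?_)
        simp_rw [div_eq_mul_inv, integral_mul_const, integral_const_mul]
        rw [integral_exp_neg_mul_abs_rpow hθ hε, ← hZ]
        field_simp

lemma sum_bound {θ s : ℝ} (hθ : 0 < θ) (hs : 3 ≤ s) :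
    2 * ((s - 3) / 2) ^ (θ + 1) / (θ + 1)
      ≤ ∑ i ∈ Finset.range ⌈s - 3⌉₊, (min ((i : ℝ) + 1) (s - 3 - i)) ^ θ := by
  set N := ⌈s - 3⌉₊ with hN
  have hs3 : (0:ℝ) ≤ s - 3 := by linarith
  have hNlt : (N : ℝ) < s - 3 + 1 := Nat.ceil_lt_add_one hs3
  have hNge : s - 3 ≤ (N : ℝ) := Nat.le_ceil _
  set g : ℝ → ℝ := fun x => (max (min x (s - 3 - x)) 0) ^ θ with hgdef
  have hgc : Continuous g :=
    Continuous.rpow_const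
      ((continuous_id.min (continuous_const.sub continuous_id)).max continuous_const)
      (fun x => Or.inr hθ.le)
  have hgi : ∀ a b : ℝ, IntervalIntegrable g volume a b :=
    fun a b => hgc.intervalIntegrable a b
  have hg0 : ∀ x, 0 ≤ g x := fun x => Real.rpow_nonneg (le_max_right _ _) θ
  have step1 : ∀ i ∈ Finset.range N,
      ∫ x in (i:ℝ)..((i:ℝ)+1), g x ≤ (min ((i : ℝ) + 1) (s - 3 - i)) ^ θ := by
    intro i hi
    have hiN : (i : ℝ) ≤ (N : ℝ) - 1 := by
      have := Finset.mem_range.mp hi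
      have : (i : ℝ) + 1 ≤ N := by exact_mod_cast this
      linarith
    have hrnn : (0:ℝ) ≤ min ((i : ℝ) + 1) (s - 3 - i) :=
      le_min (by positivity) (by linarith)
    have hb : ∀ x ∈ Set.Icc (i:ℝ) ((i:ℝ)+1), g x ≤ (min ((i : ℝ) + 1) (s - 3 - i)) ^ θ := by
      intro x hx
      refine Real.rpow_le_rpow (le_max_right _ _) ?_ hθ.le
      refine max_le (le_min ?_ ?_) hrnn
      · exact (min_le_left _ _).trans hx.2
      · exact (min_le_right _ _).trans (by linarith [hx.1])
    calc ∫ x in (i:ℝ)..((i:ℝ)+1), g x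
        ≤ ∫ _x in (i:ℝ)..((i:ℝ)+1), (min ((i : ℝ) + 1) (s - 3 - i)) ^ θ :=
          intervalIntegral.integral_mono_on (by linarith) (hgi _ _)
            intervalIntegrable_const hb
      _ = (min ((i : ℝ) + 1) (s - 3 - i)) ^ θ := by
          rw [intervalIntegral.integral_const]
          simp
  have step2 : ∫ x in (0:ℝ)..(N:ℝ), g x
      = ∑ i ∈ Finset.range N, ∫ x in (i:ℝ)..((i:ℝ)+1), g x := by
    have h := intervalIntegral.sum_integral_adjacent_intervals
      (a := fun i : ℕ => (i : ℝ)) (n := N) (f := g) (μ := volume)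
      (fun k _ => hgi _ _)
    simp only [Nat.cast_zero, Nat.cast_add, Nat.cast_one] at h ⊢
    rw [← h]
  have step3 : ∫ x in (0:ℝ)..(s-3), g x ≤ ∫ x in (0:ℝ)..(N:ℝ), g x :=
    intervalIntegral.integral_mono_interval le_rfl hs3 hNge
      (Filter.Eventually.of_forall hg0) (hgi _ _)
  have step4 : ∫ x in (0:ℝ)..(s-3), g x = 2 * ((s - 3) / 2) ^ (θ + 1) / (θ + 1) := by
    set c := (s - 3) / 2 with hc
    have hc0 : 0 ≤ c := by positivity
    have hsplit : ∫ x in (0:ℝ)..(s-3), g x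
        = (∫ x in (0:ℝ)..c, g x) + ∫ x in c..(s-3), g x :=
      (intervalIntegral.integral_add_adjacent_intervals (hgi _ _) (hgi _ _)).symm
    have h1 : ∫ x in (0:ℝ)..c, g x = ∫ x in (0:ℝ)..c, x ^ θ := by
      refine intervalIntegral.integral_congr (fun x hx => ?_)
      rw [Set.uIcc_of_le hc0] at hx
      have h1x : 0 ≤ x := hx.1
      have h2x : x ≤ c := hx.2
      show (max (min x (s - 3 - x)) 0) ^ θ = x ^ θ
      rw [min_eq_left (by rw [hc] at h2x; linarith), max_eq_left h1x]
    have h2 : ∫ x in c..(s-3), g x = ∫ x in (0:ℝ)..c, x ^ θ := by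
      have hcg : ∫ x in c..(s-3), g x = ∫ x in c..(s-3), (s - 3 - x) ^ θ := by
        refine intervalIntegral.integral_congr (fun x hx => ?_)
        rw [Set.uIcc_of_le (by rw [hc]; linarith)] at hx
        have h1x : c ≤ x := hx.1
        have h2x : x ≤ s - 3 := hx.2
        show (max (min x (s - 3 - x)) 0) ^ θ = (s - 3 - x) ^ θ
        rw [min_eq_right (by rw [hc] at h1x; linarith), max_eq_left (by linarith)]
      rw [hcg]
      have := intervalIntegral.integral_comp_sub_left (a := c) (b := s - 3)
        (fun u : ℝ => u ^ θ) (s - 3)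
      rw [this]
      norm_num
      rw [show s - 3 - c = c by rw [hc]; ring]
    have hrpow : ∫ x in (0:ℝ)..c, x ^ θ = c ^ (θ + 1) / (θ + 1) := by
      rw [integral_rpow (Or.inl (by linarith))]
      rw [Real.zero_rpow (by linarith)]
      ring
    rw [hsplit, h1, h2, hrpow]
    ring
  calc 2 * ((s - 3) / 2) ^ (θ + 1) / (θ + 1) = ∫ x in (0:ℝ)..(s-3), g x := step4.symm
    _ ≤ ∫ x in (0:ℝ)..(N:ℝ), g x := step3
    _ = ∑ i ∈ Finset.range N, ∫ x in (i:ℝ)..((i:ℝ)+1), g x := step2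
    _ ≤ ∑ i ∈ Finset.range N, (min ((i : ℝ) + 1) (s - 3 - i)) ^ θ :=
        Finset.sum_le_sum step1

theorem stmt_7 (θ : ℝ) (hθ : 0 < θ)
    (Z : ℝ) (hZ : Z = ∫ x : ℝ, Real.exp (-|x| ^ θ))
    {Ω : Type*} [MeasurableSpace Ω] (P : Measure Ω) [IsProbabilityMeasure P]
    (ξ : ℤ → Ω → ℝ) (hmeas : ∀ q, Measurable (ξ q))
    (hindep : ProbabilityTheory.iIndepFun ξ P)
    (hlaw : ∀ q, Measure.map (ξ q) P
      = volume.withDensity (fun x => ENNReal.ofReal (Real.exp (-|x| ^ θ) / Z))) :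
    ∀ ε : ℝ, 0 < ε → ε < 1 → ∀ s t : ℝ, 3 ≤ s → s ≤ t →
      P {ω | ∃ a b : ℝ, -t / 2 ≤ a ∧ b ≤ t / 2 ∧ s ≤ b - a ∧
          ∀ q : ℤ, (q : ℝ) + ξ q ω ∉ Set.Ioo a b}
        ≤ ENNReal.ofReal (t * Real.exp (-(2 * (1 - ε) / (θ + 1)) * ((s - 3) / 2) ^ (θ + 1)
            + (s / θ) * Real.log (1 / ε))) := by
  intro ε hε hε1 s t hs hst
  have hθ1 : (0:ℝ) < θ + 1 := by linarith
  have hs3 : (0:ℝ) ≤ s - 3 := by linarith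
  set N := ⌈s - 3⌉₊ with hN
  have hNlt : (N : ℝ) < s - 2 := by
    have := Nat.ceil_lt_add_one hs3
    rw [← hN] at this; linarith
  set r : ℕ → ℝ := fun i => min ((i : ℝ) + 1) (s - 3 - i) with hr
  have hrnn : ∀ i ∈ Finset.range N, 0 ≤ r i := by
    intro i hi
    have hi' : (i : ℝ) + 1 ≤ N := by exact_mod_cast Finset.mem_range.mp hi
    exact le_min (by positivity) (by linarith)
  set A : ℤ → Set Ω :=
    fun p => ⋂ i ∈ Finset.range N, ξ (p + 1 + (i : ℤ)) ⁻¹' {x | r i ≤ |x|} with hA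
  set F : Finset ℤ := Finset.Icc (⌊-t / 2⌋ + 1) ⌊t / 2 - s + 1⌋ with hF
  -- inclusion of the event in the union
  have hincl : {ω | ∃ a b : ℝ, -t / 2 ≤ a ∧ b ≤ t / 2 ∧ s ≤ b - a ∧
      ∀ q : ℤ, (q : ℝ) + ξ q ω ∉ Set.Ioo a b} ⊆ ⋃ p ∈ F, A p := by
    rintro ω ⟨a, b, hta, hbt, hab, hq⟩
    set p : ℤ := ⌊a⌋ + 1 with hp
    have hap : a < (p : ℝ) := by push_cast [hp]; linarith [Int.lt_floor_add_one a]
    have hpa : (p : ℝ) ≤ a + 1 := by push_cast [hp]; linarith [Int.floor_le a]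
    have hpF : p ∈ F := by
      rw [hF, Finset.mem_Icc]
      constructor
      · exact add_le_add_left (Int.floor_le_floor hta) 1
      · refine Int.le_floor.mpr ?_
        have : a ≤ t / 2 - s := by linarith
        linarith
    refine Set.mem_biUnion hpF ?_
    rw [hA]
    refine Set.mem_iInter₂.mpr (fun i hi => ?_)
    have hi' : (i : ℝ) + 1 ≤ N := by exact_mod_cast Finset.mem_range.mp hi
    have hqi := hq (p + 1 + (i : ℤ))
    rw [Set.mem_Ioo, not_and_or, not_lt, not_lt] at hqi
    set x := ξ (p + 1 + (i : ℤ)) ω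
    have hcast : ((p + 1 + (i : ℤ) : ℤ) : ℝ) = (p : ℝ) + 1 + i := by push_cast; ring
    show r i ≤ |x|
    rcases hqi with h1 | h2
    · rw [hcast] at h1
      have : x ≤ -(1 + i) := by linarith
      have habs : -x ≤ |x| := neg_le_abs x
      have : r i ≤ (i : ℝ) + 1 := min_le_left _ _
      linarith
    · rw [hcast] at h2
      have hxs : s - 2 - i ≤ x := by linarith
      have habs : x ≤ |x| := le_abs_self x
      have : r i ≤ s - 3 - i := min_le_right _ _
      linarith
  -- per-p bound
  set c : ℝ := ε ^ (-θ⁻¹) with hc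
  have hc0 : 0 < c := Real.rpow_pos_of_pos hε _
  have hper : ∀ p : ℤ, P (A p)
      ≤ ENNReal.ofReal (c ^ N *
          Real.exp (-((1 - ε) * ∑ i ∈ Finset.range N, r i ^ θ))) := by
    intro p
    set e : ℕ ↪ ℤ := ⟨fun i => p + 1 + (i : ℤ), fun i j h => by simp only [add_right_inj] at h; exact_mod_cast h⟩ with he
    set R : ℤ → ℝ := fun q => r (q - (p + 1)).toNat with hR
    set S : ℤ → Set Ω := fun q => ξ q ⁻¹' {x | R q ≤ |x|} with hS
    have hRe : ∀ i : ℕ, R (p + 1 + (i : ℤ)) = r i := by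
      intro i; rw [hR]; simp
    have hAeq : A p = ⋂ q ∈ (Finset.range N).map e, S q := by
      rw [hA]
      ext ω
      simp only [Set.mem_iInter, Finset.mem_map, Function.Embedding.coeFn_mk,
        forall_exists_index, and_imp, he]
      constructor
      · rintro h q i hi rfl
        have := h i hi
        rw [hS]
        show R (p + 1 + (i : ℤ)) ≤ |ξ (p + 1 + (i : ℤ)) ω|
        rw [hRe i]; exact this
      · intro h i hi
        have := h (p + 1 + (i : ℤ)) i hi rfl
        rw [hS] at this
        simpa [hRe i] using this
    have hprod : P (A p) = ∏ q ∈ (Finset.range N).map e, P (S q) := by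
      rw [hAeq]
      refine hindep.meas_biInter (fun q hq => ?_)
      exact MeasurableSpace.measurableSet_comap.mpr
        ⟨{x | R q ≤ |x|}, measurableSet_le measurable_const measurable_abs, rfl⟩
    rw [hprod, Finset.prod_map]
    have hfac : ∀ i ∈ Finset.range N,
        P (S (e i)) ≤ ENNReal.ofReal (c * Real.exp (-((1 - ε) * r i ^ θ))) := by
      intro i hi
      have : S (e i) = ξ (p + 1 + (i : ℤ)) ⁻¹' {x | r i ≤ |x|} := by
        rw [hS]; show ξ (p + 1 + (i : ℤ)) ⁻¹' {x | R (p + 1 + (i : ℤ)) ≤ |x|} = _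
        rw [hRe i]
      rw [this]
      exact tail_bound hθ hε hε1 hZ (hrnn i hi) P _ (hmeas _) (hlaw _)
    calc ∏ i ∈ Finset.range N, P (S (e i))
        ≤ ∏ i ∈ Finset.range N, ENNReal.ofReal (c * Real.exp (-((1 - ε) * r i ^ θ))) :=
          Finset.prod_le_prod' hfac
      _ = ENNReal.ofReal (c ^ N *
            Real.exp (-((1 - ε) * ∑ i ∈ Finset.range N, r i ^ θ))) := by
          rw [← ENNReal.ofReal_prod_of_nonneg (fun i _ => by positivity)]
          congr 1
          rw [Finset.prod_mul_distrib, Finset.prod_const, Finset.card_range]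
          congr 1
          rw [← Real.exp_sum]
          congr 1
          rw [Finset.mul_sum]
          simp [Finset.sum_neg_distrib]
  -- final assembly
  have hcard : (F.card : ℝ) ≤ t := by
    set d : ℤ := ⌊t / 2 - s + 1⌋ + 1 - (⌊-t / 2⌋ + 1) with hd
    have h1 : ((d.toNat : ℤ) : ℝ) = max (d : ℝ) 0 := by
      rw [Int.toNat_eq_max]; push_cast; rfl
    have h2 : (d : ℝ) ≤ t := by
      have hf1 : (⌊t / 2 - s + 1⌋ : ℝ) ≤ t / 2 - s + 1 := Int.floor_le _
      have hf2 : -t / 2 - 1 < (⌊-t / 2⌋ : ℝ) := by linarith [Int.lt_floor_add_one (-t / 2)]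
      rw [hd]; push_cast; linarith
    have h3 : (0:ℝ) ≤ t := by linarith
    calc (F.card : ℝ) = ((d.toNat : ℤ) : ℝ) := by rw [hF, Int.card_Icc, hd]; push_cast; rfl
      _ = max (d : ℝ) 0 := h1
      _ ≤ t := max_le h2 h3
  have hA0 : (0:ℝ) ≤ ((s - 3) / 2) ^ (θ + 1) := Real.rpow_nonneg (by linarith) _
  have hsum := sum_bound hθ hs
  have hE2 : Real.exp (-((1 - ε) * ∑ i ∈ Finset.range N, r i ^ θ))
      ≤ Real.exp (-(2 * (1 - ε) / (θ + 1)) * ((s - 3) / 2) ^ (θ + 1)) := by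
    refine Real.exp_le_exp.mpr ?_
    have h1ε : (0:ℝ) ≤ 1 - ε := by linarith
    have := mul_le_mul_of_nonneg_left hsum h1ε
    have heq : -(2 * (1 - ε) / (θ + 1)) * ((s - 3) / 2) ^ (θ + 1)
        = -((1 - ε) * (2 * ((s - 3) / 2) ^ (θ + 1) / (θ + 1))) := by ring
    rw [heq]
    exact neg_le_neg this
  have hcN : c ^ N ≤ Real.exp ((s / θ) * Real.log (1 / ε)) := by
    have e1 : c ^ N = ε ^ (-θ⁻¹ * (N : ℝ)) := by
      rw [hc, Real.rpow_mul hε.le, Real.rpow_natCast]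
    have e2 : Real.exp ((s / θ) * Real.log (1 / ε)) = ε ^ (-(s / θ)) := by
      rw [Real.rpow_def_of_pos hε, one_div, Real.log_inv]
      ring_nf
    rw [e1, e2]
    refine Real.rpow_le_rpow_of_exponent_ge hε hε1.le ?_
    have h1 : θ⁻¹ * (N : ℝ) ≤ s * θ⁻¹ := by
      rw [mul_comm]
      exact mul_le_mul_of_nonneg_right (by linarith) (inv_nonneg.mpr hθ.le)
    rw [div_eq_mul_inv]
    linarith
  have hreal : (F.card : ℝ) * (c ^ N *
        Real.exp (-((1 - ε) * ∑ i ∈ Finset.range N, r i ^ θ)))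
      ≤ t * Real.exp (-(2 * (1 - ε) / (θ + 1)) * ((s - 3) / 2) ^ (θ + 1)
          + (s / θ) * Real.log (1 / ε)) := by
    have ht0 : (0:ℝ) ≤ t := by linarith
    calc (F.card : ℝ) * (c ^ N *
          Real.exp (-((1 - ε) * ∑ i ∈ Finset.range N, r i ^ θ)))
        ≤ t * (Real.exp ((s / θ) * Real.log (1 / ε)) *
            Real.exp (-(2 * (1 - ε) / (θ + 1)) * ((s - 3) / 2) ^ (θ + 1))) := by
          refine mul_le_mul hcard ?_ (by positivity) ht0
          exact mul_le_mul hcN hE2 (by positivity) (by positivity)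
      _ = t * Real.exp (-(2 * (1 - ε) / (θ + 1)) * ((s - 3) / 2) ^ (θ + 1)
            + (s / θ) * Real.log (1 / ε)) := by
          rw [Real.exp_add]; ring
  calc P {ω | ∃ a b : ℝ, -t / 2 ≤ a ∧ b ≤ t / 2 ∧ s ≤ b - a ∧
        ∀ q : ℤ, (q : ℝ) + ξ q ω ∉ Set.Ioo a b}
      ≤ P (⋃ p ∈ F, A p) := measure_mono hincl
    _ ≤ ∑ p ∈ F, P (A p) := measure_biUnion_finset_le F A
    _ ≤ ∑ p ∈ F, ENNReal.ofReal (c ^ N *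
          Real.exp (-((1 - ε) * ∑ i ∈ Finset.range N, r i ^ θ))) :=
        Finset.sum_le_sum (fun p _ => hper p)
    _ = (F.card : ENNReal) * ENNReal.ofReal (c ^ N *
          Real.exp (-((1 - ε) * ∑ i ∈ Finset.range N, r i ^ θ))) := by
        rw [Finset.sum_const, nsmul_eq_mul]
    _ = ENNReal.ofReal ((F.card : ℝ) * (c ^ N *
          Real.exp (-((1 - ε) * ∑ i ∈ Finset.range N, r i ^ θ)))) := by
        conv_rhs => rw [ENNReal.ofReal_mul (show (0:ℝ) ≤ (F.card:ℝ) by positivity),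
          ENNReal.ofReal_natCast]
    _ ≤ ENNReal.ofReal (t * Real.exp (-(2 * (1 - ε) / (θ + 1)) * ((s - 3) / 2) ^ (θ + 1)
          + (s / θ) * Real.log (1 / ε))) := ENNReal.ofReal_le_ofReal hreal
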